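/- Under the bandwagon rating process, conditional on p̄_m ≠ p, subsequent sample means are conditionally biased: for n > m ≥ 1, if p̄_m ≠ p (and λ_i/i < 1 for all i) then E[p̄_n | p̄_m] ≠ p. -/

import Mathlib

open MeasureTheory ProbabilityTheory Finset Filter

/-- Sample mean of the first `n` ratings (ratings are indexed from 1). -/
noncomputable def pbar {Ω : Type*} (r : ℕ → Ω → ℝ) (n : ℕ) (ω : Ω) : ℝ :=
  (∑ i ∈ Finset.Icc 1 n, r i ω) / n

/-- σ-algebra generated by the first `n` ratings. -/
def ratingsAlg {Ω : Type*} (r : ℕ → Ω → ℝ) (n : ℕ) : MeasurableSpace Ω :=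
  ⨆ i ∈ Finset.Icc 1 n, MeasurableSpace.comap (r i) (inferInstance : MeasurableSpace ℝ)

/-- The bandwagon rating process of Xie et al., as used in the paper. -/
structure Bandwagon {Ω : Type*} [MeasurableSpace Ω] (μ : Measure Ω)
    (p : ℝ) (lam : ℕ → ℝ) (r : ℕ → Ω → ℝ) : Prop where
  prob : IsProbabilityMeasure μ
  hp : 0 < p ∧ p < 1
  hlam1 : lam 1 = 1
  hlam_nonneg : ∀ n, 1 ≤ n → 0 ≤ lam n
  hlam_mono : ∀ n, 2 ≤ n → lam n ≤ lam (n - 1)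
  hmeas : ∀ n, Measurable (r n)
  hbin : ∀ n, 1 ≤ n → ∀ ω, r n ω = 0 ∨ r n ω = 1
  hfirst : ∫ ω, r 1 ω ∂μ = p
  hcond : ∀ n, 2 ≤ n →
    μ[r n | ratingsAlg r (n - 1)] =ᵐ[μ]
      fun ω => lam n * p + (1 - lam n) * pbar r (n - 1) ω

/-- Affine-corrected rating `r̂ᵢ`. -/
noncomputable def rhat {Ω : Type*} (r : ℕ → Ω → ℝ) (lam : ℕ → ℝ) (i : ℕ) (ω : Ω) : ℝ :=
  (r i ω - (1 - lam i) * pbar r (i - 1) ω) / lam i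

section Aux

variable {Ω : Type*} [m0 : MeasurableSpace Ω] {μ : Measure Ω} {p : ℝ} {lam : ℕ → ℝ}
  {r : ℕ → Ω → ℝ}

lemma ratingsAlg_le (hmeas : ∀ n, Measurable (r n)) (n : ℕ) :
    ratingsAlg r n ≤ m0 :=
  iSup₂_le fun i _ => (hmeas i).comap_le

lemma ratingsAlg_mono {m n : ℕ} (h : m ≤ n) : ratingsAlg (Ω := Ω) r m ≤ ratingsAlg r n := by
  refine iSup₂_le fun i hi => ?_
  exact le_iSup₂ (f := fun i (_ : i ∈ Finset.Icc 1 n) =>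
    MeasurableSpace.comap (r i) inferInstance) i (Finset.Icc_subset_Icc_right h hi)

lemma r_meas_ratingsAlg {n i : ℕ} (hi : i ∈ Finset.Icc 1 n) :
    Measurable[ratingsAlg r n] (r i) :=
  measurable_iff_comap_le.mpr
    (le_iSup₂ (f := fun i (_ : i ∈ Finset.Icc 1 n) =>
      MeasurableSpace.comap (r i) inferInstance) i hi)

lemma pbar_meas_ratingsAlg (n : ℕ) : Measurable[ratingsAlg r n] (pbar r n) := by
  unfold pbar
  exact (Finset.measurable_sum _ fun i hi => r_meas_ratingsAlg hi).div_const _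

lemma pbar_meas (hmeas : ∀ n, Measurable (r n)) (n : ℕ) : Measurable (pbar r n) :=
  (pbar_meas_ratingsAlg n).mono (ratingsAlg_le hmeas n) le_rfl

lemma integrable_r (hbw : Bandwagon μ p lam r) {i : ℕ} (hi : 1 ≤ i) :
    Integrable (r i) μ := by
  haveI := hbw.prob
  refine (integrable_const (1 : ℝ)).mono' (hbw.hmeas i).aestronglyMeasurable
    (Filter.Eventually.of_forall fun ω => ?_)
  rcases hbw.hbin i hi ω with h | h <;> simp [h]

lemma integrable_pbar (hbw : Bandwagon μ p lam r) (n : ℕ) :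
    Integrable (pbar r n) μ := by
  haveI := hbw.prob
  unfold pbar
  exact (integrable_finset_sum _ fun i hi =>
    integrable_r hbw (Finset.mem_Icc.mp hi).1).div_const _

/-- conditional expectation of an affine function of an integrable function -/
lemma condexp_affine [IsProbabilityMeasure μ] {mF : MeasurableSpace Ω} (hm : mF ≤ m0)
    {f : Ω → ℝ} (hf : Integrable f μ) (p c : ℝ) :
    μ[(fun ω => p + c * (f ω - p)) | mF] =ᵐ[μ] fun ω => p + c * ((μ[f | mF]) ω - p) := by
  have h1 : (fun ω => p + c * (f ω - p)) = (fun _ : Ω => p - c * p) + c • f := by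
    funext ω; simp [smul_eq_mul]; ring
  rw [h1]
  refine (condExp_add (integrable_const _) (hf.smul c) mF).trans ?_
  have h2 : μ[(fun _ : Ω => p - c * p) | mF] = fun _ => p - c * p := condExp_const hm _
  have h3 : μ[c • f | mF] =ᵐ[μ] c • μ[f | mF] := condExp_smul c f mF
  filter_upwards [h3] with ω hω
  simp only [Pi.add_apply, h2, hω, Pi.smul_apply, smul_eq_mul]
  ring

/-- one-step conditional expectation of the sample mean -/
lemma step (hbw : Bandwagon μ p lam r) {n : ℕ} (hn : 1 ≤ n) :
    μ[pbar r (n + 1) | ratingsAlg r n] =ᵐ[μ]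
      fun ω => p + (1 - lam (n + 1) / (n + 1)) * (pbar r n ω - p) := by
  haveI := hbw.prob
  have hm : ratingsAlg r n ≤ m0 := ratingsAlg_le hbw.hmeas n
  set S : Ω → ℝ := fun ω => ∑ i ∈ Finset.Icc 1 n, r i ω with hS
  have hdecomp : pbar r (n + 1) = ((n : ℝ) + 1)⁻¹ • (S + r (n + 1)) := by
    funext ω
    simp only [pbar, Pi.smul_apply, Pi.add_apply, smul_eq_mul, hS]
    rw [Finset.sum_Icc_succ_top (by omega : 1 ≤ n + 1)]
    push_cast
    ring
  have hSmeas : StronglyMeasurable[ratingsAlg r n] S :=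
    (Finset.measurable_sum _ fun i hi => r_meas_ratingsAlg hi).stronglyMeasurable
  have hSint : Integrable S μ :=
    integrable_finset_sum _ fun i hi => integrable_r hbw (Finset.mem_Icc.mp hi).1
  have hrint : Integrable (r (n + 1)) μ := integrable_r hbw (by omega)
  have hcondr : μ[r (n + 1) | ratingsAlg r n] =ᵐ[μ]
      fun ω => lam (n + 1) * p + (1 - lam (n + 1)) * pbar r n ω := by
    have := hbw.hcond (n + 1) (by omega)
    simpa using this
  rw [hdecomp]
  refine (condExp_smul _ _ (ratingsAlg r n)).trans ?_
  have hadd : μ[S + r (n + 1) | ratingsAlg r n] =ᵐ[μ]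
      μ[S | ratingsAlg r n] + μ[r (n + 1) | ratingsAlg r n] := condExp_add hSint hrint (ratingsAlg r n)
  have hcondS : μ[S | ratingsAlg r n] = S := condExp_of_stronglyMeasurable hm hSmeas hSint
  filter_upwards [hadd, hcondr] with ω h1 h2
  have hSω : S ω = (n : ℝ) * pbar r n ω := by
    have hn0 : (n : ℝ) ≠ 0 := by positivity
    simp only [pbar, hS]
    field_simp
  simp only [Pi.smul_apply, smul_eq_mul, h1, Pi.add_apply, hcondS, h2, hSω]
  have hn1 : (n : ℝ) + 1 ≠ 0 := by positivity
  field_simp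
  ring

/-- main induction: conditional expectation of `pbar r n` given `ratingsAlg r m` -/
lemma main_induction (hbw : Bandwagon μ p lam r) {m : ℕ} (hm1 : 1 ≤ m) :
    ∀ n, m ≤ n →
    μ[pbar r n | ratingsAlg r m] =ᵐ[μ]
      fun ω => p + (∏ i ∈ Finset.Icc (m + 1) n, (1 - lam i / i)) * (pbar r m ω - p) := by
  haveI := hbw.prob
  have hmle : ratingsAlg r m ≤ m0 := ratingsAlg_le hbw.hmeas m
  refine Nat.le_induction ?_ ?_
  · rw [condExp_of_stronglyMeasurable hmle
      ((pbar_meas_ratingsAlg m).stronglyMeasurable) (integrable_pbar hbw m)]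
    refine Filter.Eventually.of_forall fun ω => ?_
    rw [Finset.Icc_eq_empty (by omega : ¬ m + 1 ≤ m), Finset.prod_empty]
    ring
  · intro n hn ih
    have hnle : ratingsAlg r n ≤ m0 := ratingsAlg_le hbw.hmeas n
    have hmon : ratingsAlg (Ω := Ω) r m ≤ ratingsAlg r n := ratingsAlg_mono hn
    have htower : μ[μ[pbar r (n + 1) | ratingsAlg r n] | ratingsAlg r m] =ᵐ[μ]
        μ[pbar r (n + 1) | ratingsAlg r m] := condExp_condExp_of_le hmon hnle
    refine htower.symm.trans ?_
    have hstep := step hbw (le_trans hm1 hn)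
    refine (condExp_congr_ae hstep).trans ?_
    refine ((condexp_affine hmle (integrable_pbar hbw n) p _).trans ?_)
    filter_upwards [ih] with ω hω
    rw [hω, Finset.prod_Icc_succ_top (by omega : m + 1 ≤ n + 1)]
    push_cast
    ring

end Aux

theorem bandwagon_conditional_bias_nonzero {Ω : Type*} [MeasurableSpace Ω] (μ : MeasureTheory.Measure Ω)
    (p : ℝ) (lam : ℕ → ℝ) (r : ℕ → Ω → ℝ)
    (hbw : Bandwagon μ p lam r) :
    ∀ m n, 1 ≤ m → m < n → (∀ i, m < i → i ≤ n → lam i < (i : ℝ)) →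
      ∀ᵐ ω ∂μ, pbar r m ω ≠ p →
        (μ[pbar r n |
          MeasurableSpace.comap (pbar r m) (inferInstance : MeasurableSpace ℝ)]) ω ≠ p := by
  haveI := hbw.prob
  intro m n hm1 hmn hlt
  have hGF : MeasurableSpace.comap (pbar r m) (inferInstance : MeasurableSpace ℝ) ≤
      ratingsAlg r m := measurable_iff_comap_le.mp (pbar_meas_ratingsAlg m)
  have hFle : ratingsAlg r m ≤ ‹MeasurableSpace Ω› := ratingsAlg_le hbw.hmeas m
  have hGle : MeasurableSpace.comap (pbar r m) (inferInstance : MeasurableSpace ℝ) ≤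
      ‹MeasurableSpace Ω› := hGF.trans hFle
  set c : ℝ := ∏ i ∈ Finset.Icc (m + 1) n, (1 - lam i / i) with hc
  have hcpos : 0 < c := by
    refine Finset.prod_pos fun i hi => ?_
    obtain ⟨hi1, hi2⟩ := Finset.mem_Icc.mp hi
    have hipos : (0 : ℝ) < i := by exact_mod_cast (by omega : 0 < i)
    have := hlt i (by omega) hi2
    rw [sub_pos, div_lt_one hipos]
    exact this
  have htower := condExp_condExp_of_le (f := pbar r n) (μ := μ) hGF hFle
  have hmain := main_induction hbw hm1 n (le_of_lt hmn)
  have hGmeas : Measurable[MeasurableSpace.comap (pbar r m) (inferInstance : MeasurableSpace ℝ)]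
      (pbar r m) := measurable_iff_comap_le.mpr le_rfl
  have hfinal : μ[pbar r n | MeasurableSpace.comap (pbar r m)
        (inferInstance : MeasurableSpace ℝ)] =ᵐ[μ] fun ω => p + c * (pbar r m ω - p) := by
    refine htower.symm.trans ?_
    refine (condExp_congr_ae hmain).trans ?_
    refine (condexp_affine hGle (integrable_pbar hbw m) p c).trans ?_
    rw [condExp_of_stronglyMeasurable hGle hGmeas.stronglyMeasurable (integrable_pbar hbw m)]
  filter_upwards [hfinal] with ω hω hne
  rw [hω]
  intro habs
  have : c * (pbar r m ω - p) = 0 := by linarith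
  rcases mul_eq_zero.mp this with h | h
  · exact absurd h (ne_of_gt hcpos)
  · exact hne (by linarith)
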